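/- arXiv:1910.12428 — 2 statements merged into one kernel-verified Lean document; each statement's English description precedes it below -/
import Mathlib

section
/- Let M be a symmetric invertible real n×n matrix whose sparsity graph is acyclic (a forest), let D = Diag(M), and assume 2D − M is invertible. Then for every index j, the j-th diagonal entry of (2D − M)⁻¹ equals the j-th diagonal entry of M⁻¹. -/
open Matrix

/-- In an acyclic graph, a walk and a path with the same endpoints have the
same length parity. -/
lemma walk_path_parity {V : Type*} [DecidableEq V] {G : SimpleGraph V} (hG : G.IsAcyclic) :
    ∀ {u v : V} (w : G.Walk u v) (p : G.Walk u v), p.IsPath →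
      Even (w.length + p.length) := by
  intro u v w
  induction w with
  | nil =>
    intro p hp
    rw [SimpleGraph.Walk.isPath_iff_eq_nil.mp hp]
    simp
  | @cons u x v h w' ih =>
    intro p hp
    by_cases hx : x ∈ p.support
    · have hq : (p.dropUntil x hx).IsPath := hp.dropUntil hx
      have hEven := ih (p.dropUntil x hx) hq
      have htake : (p.takeUntil x hx).length = 1 := by
        have h1 : (SimpleGraph.Walk.cons h SimpleGraph.Walk.nil : G.Walk u x).IsPath := by
          simp [SimpleGraph.Walk.cons_isPath_iff, h.ne]
        have := hG.path_unique ⟨p.takeUntil x hx, hp.takeUntil hx⟩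
          ⟨SimpleGraph.Walk.cons h SimpleGraph.Walk.nil, h1⟩
        have h2 : (p.takeUntil x hx) = SimpleGraph.Walk.cons h SimpleGraph.Walk.nil :=
          congrArg Subtype.val this
        simp [h2]
      have hlen : p.length = 1 + (p.dropUntil x hx).length := by
        conv_lhs => rw [← SimpleGraph.Walk.take_spec p hx]
        rw [SimpleGraph.Walk.length_append, htake]
      rw [SimpleGraph.Walk.length_cons, hlen]
      obtain ⟨k, hk⟩ := hEven
      exact ⟨k + 1, by omega⟩
    · have hq : (SimpleGraph.Walk.cons h.symm p).IsPath := by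
        rw [SimpleGraph.Walk.cons_isPath_iff]
        exact ⟨hp, hx⟩
      have hEven := ih (SimpleGraph.Walk.cons h.symm p) hq
      rw [SimpleGraph.Walk.length_cons] at hEven ⊢
      obtain ⟨k, hk⟩ := hEven
      exact ⟨k, by omega⟩

/-- An acyclic graph admits a real sign function that is `±1` on each vertex and
whose product across each edge is `-1`. -/
lemma exists_sign_fn {V : Type*} [DecidableEq V] {G : SimpleGraph V} (hG : G.IsAcyclic) :
    ∃ ε : V → ℝ, (∀ v, ε v * ε v = 1) ∧ ∀ u v, G.Adj u v → ε u * ε v = -1 := by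
  classical
  refine ⟨fun v => (-1 : ℝ) ^ (G.dist (G.connectedComponentMk v).out v), ?_, ?_⟩
  · intro v
    rw [← pow_add]
    exact Even.neg_one_pow ⟨_, rfl⟩
  · intro u v h
    have hcc : G.connectedComponentMk u = G.connectedComponentMk v :=
      SimpleGraph.ConnectedComponent.sound h.reachable
    set r := (G.connectedComponentMk u).out with hr
    have hru : G.Reachable r u := by
      rw [SimpleGraph.ConnectedComponent.eq.symm]
      exact (G.connectedComponentMk u).out_eq
    have hrv : G.Reachable r v := hru.trans h.reachable
    obtain ⟨w1, hw1⟩ := hru.exists_walk_length_eq_dist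
    obtain ⟨p, hp, hplen⟩ := hrv.exists_path_of_dist
    have hpar := walk_path_parity hG (w1.append (SimpleGraph.Walk.cons h SimpleGraph.Walk.nil)) p hp
    rw [SimpleGraph.Walk.length_append, SimpleGraph.Walk.length_cons,
      SimpleGraph.Walk.length_nil, hw1, hplen] at hpar
    have hodd : Odd (G.dist r u + G.dist r v) := by
      obtain ⟨k, hk⟩ := hpar
      exact ⟨k - 1, by omega⟩
    show (-1 : ℝ) ^ G.dist (Quot.out (G.connectedComponentMk u)) u *
      (-1 : ℝ) ^ G.dist (Quot.out (G.connectedComponentMk v)) v = -1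
    rw [← hcc, ← hr, ← pow_add]
    exact Odd.neg_one_pow hodd

/-- Key step of Theorem 6: for a symmetric invertible matrix `M` with forest
sparsity graph and `D = Diag(M)` with `2D − M` invertible, the diagonals of
`(2D − M)⁻¹` and `M⁻¹` agree. -/
theorem stmt9 {n : ℕ} (M : Matrix (Fin n) (Fin n) ℝ) (hM : M.IsSymm)
    (hMinv : IsUnit M.det)
    (G : SimpleGraph (Fin n)) (hG : ∀ i j, G.Adj i j ↔ i ≠ j ∧ M i j ≠ 0)
    (hforest : G.IsAcyclic)
    (D : Matrix (Fin n) (Fin n) ℝ) (hD : D = Matrix.diagonal (fun i => M i i))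
    (h2D : IsUnit ((2 : ℝ) • D - M).det) :
    ∀ j, (((2 : ℝ) • D - M)⁻¹) j j = M⁻¹ j j := by
  obtain ⟨ε, hsq, hedge⟩ := exists_sign_fn hforest
  set Δ : Matrix (Fin n) (Fin n) ℝ := Matrix.diagonal ε with hΔ
  have hΔ2 : Δ * Δ = 1 := by
    rw [hΔ, Matrix.diagonal_mul_diagonal]
    rw [show (fun i => ε i * ε i) = fun _ => (1 : ℝ) from funext hsq]
    exact Matrix.diagonal_one
  have hΔinv : Δ⁻¹ = Δ := Matrix.inv_eq_right_inv hΔ2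
  have hN : (2 : ℝ) • D - M = Δ * M * Δ := by
    ext i j
    rw [hΔ, Matrix.mul_diagonal, Matrix.diagonal_mul]
    by_cases hij : i = j
    · subst hij
      simp only [Matrix.sub_apply, Matrix.smul_apply, hD, Matrix.diagonal_apply_eq,
        smul_eq_mul]
      rw [mul_comm (ε i), mul_assoc, hsq i]
      ring
    · simp only [Matrix.sub_apply, Matrix.smul_apply, hD, Matrix.diagonal_apply_ne _ hij,
        smul_eq_mul, mul_zero, zero_sub]
      by_cases hMij : M i j = 0
      · simp [hMij]
      · have hadj : G.Adj i j := (hG i j).mpr ⟨hij, hMij⟩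
        rw [mul_comm (ε i), mul_assoc, hedge i j hadj]
        ring
  intro j
  rw [hN, Matrix.mul_inv_rev, Matrix.mul_inv_rev, hΔinv, hΔ, ← Matrix.mul_assoc,
    Matrix.mul_diagonal, Matrix.diagonal_mul]
  rw [mul_comm (ε j), mul_assoc, hsq j, mul_one]
end

section
/- Let (Ω, ℙ) be a probability space carrying random variables Z, Υ, Θ with Z standard Gaussian, Z independent of the pair (Θ, Υ), and Υ ≥ 0 almost surely. Let L > 0 satisfy ℙ[Υ > L] ≤ L, and let τ > 0 and t > 0. Then ℙ[|Θ| > 0 and |τ·√Υ·Z + Θ| < t] ≤ ℙ[0 < |Θ| ≤ 2t] + 2·Q(t/(τ√L)) + L. -/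
open MeasureTheory ProbabilityTheory

/-- Standard Gaussian tail probability `Q(r) = ℙ[ξ > r]` for `ξ ~ N(0,1)`. -/
noncomputable def gaussQ (r : ℝ) : ℝ :=
  ((gaussianReal 0 1) (Set.Ioi r)).toReal

lemma gaussSymm (r : ℝ) : (gaussianReal 0 1) (Set.Iio (-r)) = (gaussianReal 0 1) (Set.Ioi r) := by
  have h : (gaussianReal 0 1).map ((-1 : ℝ) * ·) = gaussianReal 0 1 := by
    rw [gaussianReal_map_const_mul]; norm_num
  have := (Measure.map_apply (by fun_prop : Measurable ((-1:ℝ) * ·)) measurableSet_Iio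
    (μ := gaussianReal 0 1) (s := Set.Iio (-r)))
  rw [h] at this
  rw [this]
  congr 1
  ext x
  simp [lt_neg]

/-- Bound on the proportion of false negatives (proof of Theorem 1):
`ℙ[|Θ| > 0, |τ√Υ·Z + Θ| < t] ≤ ℙ[0 < |Θ| ≤ 2t] + 2Q(t/(τ√L)) + L`. -/
theorem stmt15 {Ω : Type*} [MeasurableSpace Ω] (μ : Measure Ω) [IsProbabilityMeasure μ]
    (Z Υ Θ : Ω → ℝ) (hZm : Measurable Z) (hΥm : Measurable Υ) (hΘm : Measurable Θ)
    (hZ : μ.map Z = gaussianReal 0 1)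
    (hindep : IndepFun Z (fun ω => (Θ ω, Υ ω)) μ)
    (hΥ0 : ∀ᵐ ω ∂μ, 0 ≤ Υ ω)
    (L τ t : ℝ) (hL : 0 < L) (hτ : 0 < τ) (ht : 0 < t)
    (hLtail : (μ {ω | L < Υ ω}).toReal ≤ L) :
    (μ {ω | 0 < |Θ ω| ∧ |τ * Real.sqrt (Υ ω) * Z ω + Θ ω| < t}).toReal ≤
      (μ {ω | 0 < |Θ ω| ∧ |Θ ω| ≤ 2 * t}).toReal + 2 * gaussQ (t / (τ * Real.sqrt L)) + L := by
  set r := t / (τ * Real.sqrt L) with hr_def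
  have hsL : 0 < Real.sqrt L := Real.sqrt_pos.mpr hL
  have hτL : 0 < τ * Real.sqrt L := mul_pos hτ hsL
  have hr : 0 < r := div_pos ht hτL
  set S := {ω | 0 < |Θ ω| ∧ |τ * Real.sqrt (Υ ω) * Z ω + Θ ω| < t} with hS_def
  set B := {ω | 0 < |Θ ω| ∧ |Θ ω| ≤ 2 * t} with hB_def
  set C := {ω | r < |Z ω|} with hC_def
  set D := {ω | L < Υ ω} with hD_def
  -- inclusion
  have hsub : S ⊆ B ∪ C ∪ D := by
    intro ω hω
    obtain ⟨h1, h2⟩ := hω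
    by_cases hb : |Θ ω| ≤ 2 * t
    · exact Or.inl (Or.inl ⟨h1, hb⟩)
    by_cases hd : L < Υ ω
    · exact Or.inr hd
    push_neg at hb hd
    refine Or.inl (Or.inr ?_)
    have hsΥ : Real.sqrt (Υ ω) ≤ Real.sqrt L := Real.sqrt_le_sqrt hd
    have hkey : t < |τ * Real.sqrt (Υ ω) * Z ω| := by
      have := abs_sub_abs_le_abs_sub (Θ ω) (-(τ * Real.sqrt (Υ ω) * Z ω))
      simp only [sub_neg_eq_add, abs_neg] at this
      have h3 : |Θ ω + τ * Real.sqrt (Υ ω) * Z ω| < t := by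
        rwa [add_comm] at h2
      nlinarith [abs_nonneg (Θ ω + τ * Real.sqrt (Υ ω) * Z ω)]
    have habs : |τ * Real.sqrt (Υ ω) * Z ω| = τ * Real.sqrt (Υ ω) * |Z ω| := by
      rw [abs_mul, abs_of_nonneg (by positivity : (0:ℝ) ≤ τ * Real.sqrt (Υ ω))]
    rw [habs] at hkey
    have h4 : t < τ * Real.sqrt L * |Z ω| := by
      nlinarith [abs_nonneg (Z ω), Real.sqrt_nonneg (Υ ω)]
    show r < |Z ω|
    rw [hr_def, div_lt_iff₀ hτL]
    nlinarith
  -- measure bound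
  have hBm : MeasurableSet B := by
    apply MeasurableSet.inter
    · exact measurableSet_lt measurable_const hΘm.abs
    · exact measurableSet_le hΘm.abs measurable_const
  have hCm : MeasurableSet C := measurableSet_lt measurable_const hZm.abs
  have hDm : MeasurableSet D := measurableSet_lt measurable_const hΥm
  have hmeas : μ S ≤ μ B + μ C + μ D :=
    le_trans (measure_mono hsub)
      (le_trans (measure_union_le _ _) (add_le_add_left (measure_union_le _ _) _))
  -- gaussian tail
  have hC_val : (μ C).toReal ≤ 2 * gaussQ r := by
    have hCmap : μ C = (gaussianReal 0 1) {x | r < |x|} := by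
      rw [← hZ, Measure.map_apply hZm (measurableSet_lt measurable_const measurable_abs)]
      rfl
    have hset : {x : ℝ | r < |x|} = Set.Ioi r ∪ Set.Iio (-r) := by
      ext x
      simp only [Set.mem_setOf_eq, Set.mem_union, Set.mem_Ioi, Set.mem_Iio, lt_abs, lt_neg]
    have hle : (gaussianReal 0 1) {x | r < |x|} ≤
        (gaussianReal 0 1) (Set.Ioi r) + (gaussianReal 0 1) (Set.Iio (-r)) := by
      rw [hset]; exact measure_union_le _ _
    rw [gaussSymm] at hle
    rw [hCmap]
    have hfin : (gaussianReal 0 1) (Set.Ioi r) ≠ ⊤ := measure_ne_top _ _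
    calc ((gaussianReal 0 1) {x | r < |x|}).toReal
        ≤ ((gaussianReal 0 1) (Set.Ioi r) + (gaussianReal 0 1) (Set.Ioi r)).toReal :=
          ENNReal.toReal_mono (by finiteness) hle
      _ = 2 * gaussQ r := by
          rw [ENNReal.toReal_add hfin hfin, gaussQ]; ring
  have htR : (μ S).toReal ≤ (μ B).toReal + (μ C).toReal + (μ D).toReal := by
    have := ENNReal.toReal_mono (by finiteness) hmeas
    rwa [ENNReal.toReal_add (by finiteness) (by finiteness),
      ENNReal.toReal_add (by finiteness) (by finiteness)] at this
  linarith
end
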